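/- arXiv:1309.1835 — 2 statements merged into one kernel-verified Lean document; each statement's English description precedes it below -/
import Mathlib

section
/- Let G and G' be two finite simple graphs on the same vertex set having the same 3-element homogeneous subsets, and let U be the Boolean sum of G and G'. If U contains no triangle (no 3-element cycle), then every connected component of U is a cycle of even length or a path; in particular, U is bipartite. -/
open SimpleGraph

/-- The Boolean sum `G ∔ G'`: edges are the symmetric difference of the edge sets. -/
def booleanSum {V : Type*} (G G' : SimpleGraph V) : SimpleGraph V where
  Adj x y := (G.Adj x y ∧ ¬ G'.Adj x y) ∨ (G'.Adj x y ∧ ¬ G.Adj x y)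
  symm := by
    constructor
    rintro x y (⟨h1, h2⟩ | ⟨h1, h2⟩)
    · exact Or.inl ⟨h1.symm, fun h => h2 h.symm⟩
    · exact Or.inr ⟨h1.symm, fun h => h2 h.symm⟩
  loopless := by
    constructor
    rintro x (⟨h, -⟩ | ⟨h, -⟩)
    · exact G.loopless.irrefl x h
    · exact G'.loopless.irrefl x h
/-- Two graphs on the same vertex set have the same 3-element homogeneous subsets:
a 3-element set is a clique or an independent set of `G` iff it is one of `G'`. -/
def SameHomog3 {V : Type*} (G G' : SimpleGraph V) : Prop :=
  ∀ s : Finset V, s.card = 3 →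
    ((G.IsClique ↑s ∨ Gᶜ.IsClique ↑s) ↔ (G'.IsClique ↑s ∨ G'ᶜ.IsClique ↑s))
/-- A graph is bipartite if its vertex set can be partitioned into two independent sets. -/
def IsBipartite {W : Type*} (H : SimpleGraph W) : Prop :=
  ∃ A B : Set W, A ∪ B = Set.univ ∧ A ∩ B = ∅ ∧
    (∀ x ∈ A, ∀ y ∈ A, ¬ H.Adj x y) ∧ (∀ x ∈ B, ∀ y ∈ B, ¬ H.Adj x y)
/-- The connected component `c` of `G` induces a cycle of even length or a path. -/
def CompIsEvenCycleOrPath {V : Type*} (G : SimpleGraph V) (c : G.ConnectedComponent) : Prop :=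
  (∃ n, 3 ≤ n ∧ Even n ∧ Nonempty (G.induce c.supp ≃g cycleGraph n)) ∨
  (∃ n, Nonempty (G.induce c.supp ≃g pathGraph n))

set_option linter.unusedSectionVars false

namespace BSaux

variable {V : Type} {A B : V → V} {v0 : V}

def aw (A B : V → V) (v0 : V) : ℕ → V
  | 0 => v0
  | n+1 => (if Even n then A else B) (aw A B v0 n)

lemma aw_succ (A B : V → V) (v0 : V) (n : ℕ) :
    aw A B v0 (n+1) = (if Even n then A else B) (aw A B v0 n) := rfl

lemma aw_prev (hA : Function.Involutive A) (hB : Function.Involutive B) (n : ℕ) :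
    (if Even n then A else B) (aw A B v0 (n+1)) = aw A B v0 n := by
  rw [aw_succ]; split_ifs with h
  · exact hA _
  · exact hB _

lemma step_congr {m n : ℕ} (h : Even m ↔ Even n) :
    (if Even m then A else B) = (if Even n then A else B) := by
  by_cases hm : Even m
  · rw [if_pos hm, if_pos (h.mp hm)]
  · rw [if_neg hm, if_neg (fun hn => hm (h.mpr hn))]

lemma repeat_structure (hA : Function.Involutive A) (hB : Function.Involutive B)
    {i j : ℕ} (hij : i < j)
    (hinj : ∀ a b, a < b → b < j → aw A B v0 a ≠ aw A B v0 b)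
    (hnostall : ∀ m, m + 1 ≤ j → aw A B v0 m ≠ aw A B v0 (m+1))
    (heq : aw A B v0 i = aw A B v0 j) :
    i = 0 ∧ Even j := by
  set g := aw A B v0 with hg
  obtain ⟨j', rfl⟩ : ∃ j', j = j' + 1 := ⟨j - 1, by omega⟩
  have hpar : Even i ↔ Even (j' + 1) := by
    by_contra hpar
    have hpar' : Even i ↔ Even j' := by
      simp only [Nat.even_iff] at hpar ⊢; omega
    have h1 : (if Even j' then A else B) (g (j' + 1)) = g j' := aw_prev hA hB j'
    rw [step_congr hpar'.symm, ← heq, ← aw_succ] at h1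
    -- h1 : g (i+1) = g j'
    rcases Nat.lt_trichotomy (i+1) j' with h | h | h
    · exact hinj (i+1) j' h (Nat.lt_succ_self j') h1
    · -- j = i + 2, same parity, contradiction with hpar
      subst h
      simp only [Nat.even_iff] at hpar
      omega
    · -- i = j', stall
      have hi : i = j' := by omega
      subst hi
      exact hnostall i le_rfl heq
  have hi0 : i = 0 := by
    by_contra hi0
    obtain ⟨i', rfl⟩ : ∃ i', i = i' + 1 := ⟨i - 1, by omega⟩
    have hpar'' : Even i' ↔ Even j' := by
      simp only [Nat.even_iff] at hpar
      simp only [Nat.even_iff]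
      omega
    have h1 : (if Even i' then A else B) (g (i' + 1)) = g i' := aw_prev hA hB i'
    have h2 : (if Even j' then A else B) (g (j' + 1)) = g j' := aw_prev hA hB j'
    rw [step_congr hpar''] at h1
    rw [← heq] at h2
    rw [h2] at h1
    exact hinj i' j' (by omega) (Nat.lt_succ_self j') h1.symm
  refine ⟨hi0, ?_⟩
  subst hi0
  exact hpar.mp (Even.zero)


section Main

variable {V : Type} [Fintype V] {U : SimpleGraph V} {A B : V → V}

lemma aw_mem (hadj : ∀ x y, U.Adj x y ↔ ((A x = y ∨ B x = y) ∧ x ≠ y)) (v0 : V) :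
    ∀ n, U.connectedComponentMk (aw A B v0 n) = U.connectedComponentMk v0 := by
  intro n
  induction n with
  | zero => rfl
  | succ n ih =>
    rcases eq_or_ne (aw A B v0 (n+1)) (aw A B v0 n) with h | h
    · rw [h, ih]
    · have hadj' : U.Adj (aw A B v0 n) (aw A B v0 (n+1)) := by
        rw [hadj]
        refine ⟨?_, h.symm⟩
        rw [aw_succ]
        by_cases hn : Even n
        · left; rw [if_pos hn]
        · right; rw [if_neg hn]
      rw [← ih]
      exact (ConnectedComponent.sound hadj'.reachable).symm

lemma path_case (hA : Function.Involutive A) (hB : Function.Involutive B)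
    (hadj : ∀ x y, U.Adj x y ↔ ((A x = y ∨ B x = y) ∧ x ≠ y))
    (v0 : V) (hB0 : B v0 = v0) :
    ∃ n, Nonempty (U.induce (U.connectedComponentMk v0).supp ≃g pathGraph n) := by
  classical
  set g := aw A B v0 with hgdef
  have hg0 : g 0 = v0 := rfl
  have hmem : ∀ n, U.connectedComponentMk (g n) = U.connectedComponentMk v0 := aw_mem hadj v0
  have hsucc : ∀ m, g (m+1) = (if Even m then A else B) (g m) := fun m => aw_succ A B v0 m
  have hprev : ∀ m, (if Even m then A else B) (g (m+1)) = g m := fun m => aw_prev hA hB m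
  have hex : ∃ j, ∃ i, i < j ∧ g i = g j := by
    obtain ⟨a, b, hne', hab⟩ := Finite.exists_ne_map_eq_of_infinite g
    rcases hne'.lt_or_gt with h | h
    · exact ⟨b, a, h, hab⟩
    · exact ⟨a, b, h, hab.symm⟩
  obtain ⟨j, ⟨i, hij, heq⟩, hmin⟩ :
      ∃ j, (∃ i, i < j ∧ g i = g j) ∧ ∀ k, k < j → ¬∃ i, i < k ∧ g i = g k :=
    ⟨Nat.find hex, Nat.find_spec hex, fun k hk => Nat.find_min hex hk⟩
  have hinj : ∀ a b, a < b → b < j → g a ≠ g b := fun a b h1 h2 h =>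
    hmin b h2 ⟨a, h1, h⟩
  obtain ⟨N, rfl⟩ : ∃ N, j = N + 1 := ⟨j - 1, by omega⟩
  by_cases hstall : g N = g (N + 1)
  · -- path case
    have hinj' : ∀ s t : ℕ, s ≤ N → t ≤ N → g s = g t → s = t := by
      intro s t hs ht hst
      rcases Nat.lt_trichotomy s t with h | h | h
      · exact absurd hst (hinj s t h (by omega))
      · exact h
      · exact absurd hst.symm (hinj t s h (by omega))
    -- closure / neighbor identification
    have cl : ∀ k, k ≤ N → ∀ y, (A (g k) = y ∨ B (g k) = y) →
        y = g k ∨ (1 ≤ k ∧ y = g (k-1)) ∨ (k + 1 ≤ N ∧ y = g (k+1)) := by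
      intro k hk y hy
      by_cases hek : Even k
      · rcases hy with hy | hy
        · have h1 : g (k+1) = y := by rw [hsucc k, if_pos hek, hy]
          rcases eq_or_lt_of_le hk with rfl | hk'
          · left; rw [← h1, ← hstall]
          · right; right; exact ⟨hk', h1.symm⟩
        · rcases Nat.eq_zero_or_pos k with rfl | hk0
          · left; rw [← hy, hg0, hB0]
          · right; left
            refine ⟨hk0, ?_⟩
            obtain ⟨k', rfl⟩ : ∃ k', k = k' + 1 := ⟨k - 1, by omega⟩
            have hek' : ¬ Even k' := by
              simp only [Nat.even_iff] at hek ⊢; omega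
            have h1 := hprev k'
            rw [if_neg hek'] at h1
            rw [← hy, h1]
            simp
        -- done even case
      · rcases hy with hy | hy
        · -- A with k odd : k ≥ 1, A = step (k-1)
          have hk0 : 1 ≤ k := by
            rcases Nat.eq_zero_or_pos k with rfl | hk0
            · exact absurd Even.zero hek
            · exact hk0
          right; left
          refine ⟨hk0, ?_⟩
          obtain ⟨k', rfl⟩ : ∃ k', k = k' + 1 := ⟨k - 1, by omega⟩
          have hek' : Even k' := by
            simp only [Nat.even_iff] at hek ⊢; omega
          have h1 := hprev k'
          rw [if_pos hek'] at h1
          rw [← hy, h1]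
          simp
        · have h1 : g (k+1) = y := by rw [hsucc k, if_neg hek, hy]
          rcases eq_or_lt_of_le hk with rfl | hk'
          · left; rw [← h1, ← hstall]
          · right; right; exact ⟨hk', h1.symm⟩
    -- surjectivity
    have hsurj : ∀ w, U.connectedComponentMk w = U.connectedComponentMk v0 →
        ∃ k, k ≤ N ∧ g k = w := by
      intro w hw
      have hr : U.Reachable w v0 := ConnectedComponent.exact hw
      obtain ⟨p⟩ := hr
      clear hw
      clear_value g
      clear hgdef hmem hsucc hprev hex hmin hij heq hinj hstall hinj'
      induction p with
      | nil => exact ⟨0, Nat.zero_le _, hg0⟩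
      | @cons a b' c h p ih =>
        obtain ⟨k, hk, rfl⟩ := ih hB0 hg0
        have h2 : U.Adj (g k) a := h.symm
        rw [hadj] at h2
        obtain ⟨hy, hne2⟩ := h2
        rcases cl k hk a hy with h1 | ⟨hk1, h1⟩ | ⟨hk1, h1⟩
        · exact absurd h1.symm hne2
        · exact ⟨k - 1, by omega, h1.symm⟩
        · exact ⟨k + 1, hk1, h1.symm⟩
    -- step adjacency
    have hstep : ∀ s, s + 1 ≤ N → U.Adj (g s) (g (s+1)) := by
      intro s hs
      rw [hadj]
      refine ⟨?_, hinj s (s+1) (by omega) (by omega)⟩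
      rw [hsucc s]
      by_cases hes : Even s
      · left; rw [if_pos hes]
      · right; rw [if_neg hes]
    -- build the iso
    refine ⟨N + 1, ?_⟩
    have hmem' : ∀ k : Fin (N+1), g k ∈ (U.connectedComponentMk v0).supp := fun k => by
      rw [ConnectedComponent.mem_supp_iff]; exact hmem k
    set φ : Fin (N+1) → ↥((U.connectedComponentMk v0).supp) := fun k => ⟨g k, hmem' k⟩ with hφ
    have hφbij : Function.Bijective φ := by
      constructor
      · intro a b hab
        have h1 : g a = g b := congrArg Subtype.val hab
        exact Fin.ext (hinj' a b (by omega) (by omega) h1)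
      · rintro ⟨w, hw⟩
        rw [ConnectedComponent.mem_supp_iff] at hw
        obtain ⟨k, hk, hgk⟩ := hsurj w hw
        exact ⟨⟨k, by omega⟩, Subtype.ext hgk⟩
    have hadjchar : ∀ a b : Fin (N+1), U.Adj (g a) (g b) ↔
        (a.val + 1 = b.val ∨ b.val + 1 = a.val) := by
      intro a b
      constructor
      · intro h
        have h2 := h
        rw [hadj] at h2
        obtain ⟨hy, hne2⟩ := h2
        rcases cl a (by omega) (g b) hy with h1 | ⟨ha1, h1⟩ | ⟨ha1, h1⟩
        · exact absurd h1.symm hne2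
        · right
          have := hinj' b.val (a.val - 1) (by omega) (by omega) h1
          omega
        · left
          have := hinj' b.val (a.val + 1) (by omega) (by omega) h1
          omega
      · intro h
        rcases h with h | h
        · have h1 := hstep a.val (by omega)
          rwa [show a.val + 1 = b.val from h] at h1
        · have h1 := hstep b.val (by omega)
          rw [show b.val + 1 = a.val from h] at h1
          exact h1.symm
    refine ⟨SimpleGraph.Iso.symm ⟨Equiv.ofBijective φ hφbij, ?_⟩⟩
    intro a b
    show (U.induce _).Adj (φ a) (φ b) ↔ (pathGraph (N+1)).Adj a b
    rw [pathGraph_adj, ← hadjchar a b]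
    simp [hφ]
  · -- no stall: derive contradiction via repeat_structure
    exfalso
    have hnostall : ∀ m, m + 1 ≤ N + 1 → g m ≠ g (m+1) := by
      intro m hm h
      rcases Nat.lt_or_ge (m+1) (N+1) with h2 | h2
      · exact hmin (m+1) h2 ⟨m, by omega, h⟩
      · have : m = N := by omega
        subst this
        exact hstall h
    obtain ⟨hi0, hev⟩ := repeat_structure hA hB hij hinj hnostall heq
    subst hi0
    -- g (N) = B (g (N+1)) = B v0 = v0 = g 0 = g (N+1), contradicting hstall
    have hN : ¬ Even N := by
      rcases hev with ⟨t, ht⟩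
      simp only [Nat.even_iff] at *
      omega
    have h1 := hprev N
    rw [if_neg hN] at h1
    rw [← heq, hg0, hB0, ← hg0, heq] at h1
    exact hstall h1.symm


lemma cycle_case (hA : Function.Involutive A) (hB : Function.Involutive B)
    (hadj : ∀ x y, U.Adj x y ↔ ((A x = y ∨ B x = y) ∧ x ≠ y))
    (hne : ∀ x y, x ≠ y → A x = y → B x = y → False)
    (v0 : V)
    (hdeg : ∀ w, U.connectedComponentMk w = U.connectedComponentMk v0 → A w ≠ w ∧ B w ≠ w) :
    ∃ n, 3 ≤ n ∧ Even n ∧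
      Nonempty (U.induce (U.connectedComponentMk v0).supp ≃g cycleGraph n) := by
  classical
  set g := aw A B v0 with hgdef
  have hg0 : g 0 = v0 := rfl
  have hmem : ∀ n, U.connectedComponentMk (g n) = U.connectedComponentMk v0 := aw_mem hadj v0
  have hsucc : ∀ m, g (m+1) = (if Even m then A else B) (g m) := fun m => aw_succ A B v0 m
  have hprev : ∀ m, (if Even m then A else B) (g (m+1)) = g m := fun m => aw_prev hA hB m
  have hnostall : ∀ m, g m ≠ g (m+1) := by
    intro m h
    have hd := hdeg (g m) (hmem m)
    rw [hsucc m] at h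
    by_cases hem : Even m
    · rw [if_pos hem] at h; exact hd.1 h.symm
    · rw [if_neg hem] at h; exact hd.2 h.symm
  have hex : ∃ j, ∃ i, i < j ∧ g i = g j := by
    obtain ⟨a, b, hne', hab⟩ := Finite.exists_ne_map_eq_of_infinite g
    rcases hne'.lt_or_gt with h | h
    · exact ⟨b, a, h, hab⟩
    · exact ⟨a, b, h, hab.symm⟩
  obtain ⟨j, ⟨i, hij, heq⟩, hmin⟩ :
      ∃ j, (∃ i, i < j ∧ g i = g j) ∧ ∀ k, k < j → ¬∃ i, i < k ∧ g i = g k :=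
    ⟨Nat.find hex, Nat.find_spec hex, fun k hk => Nat.find_min hex hk⟩
  have hinj : ∀ a b, a < b → b < j → g a ≠ g b := fun a b h1 h2 h =>
    hmin b h2 ⟨a, h1, h⟩
  obtain ⟨hi0, hev⟩ := repeat_structure hA hB hij hinj (fun m _ => hnostall m) heq
  subst hi0
  -- exclude j = 2
  have hj2 : j ≠ 2 := by
    rintro rfl
    have h1 : g 1 = A (g 0) := by rw [hsucc 0, if_pos Even.zero]
    have h2 : g 2 = B (g 1) := by
      rw [hsucc 1, if_neg (by simp [Nat.even_iff])]
    have h3 : B (g 0) = g 1 := by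
      have h4 : B (g 1) = g 0 := by rw [← h2]; exact heq.symm
      rw [← h4, hB]
    exact hne (g 0) (g 1) (hnostall 0) h1.symm h3
  have hj4 : 4 ≤ j := by
    rcases hev with ⟨t, ht⟩
    have : 1 ≤ j := by omega
    omega
  obtain ⟨m, rfl⟩ : ∃ m, j = m + 2 := ⟨j - 2, by omega⟩
  have hinj' : ∀ s t : ℕ, s < m + 2 → t < m + 2 → g s = g t → s = t := by
    intro s t hs ht hst
    rcases Nat.lt_trichotomy s t with h | h | h
    · exact absurd hst (hinj s t h ht)
    · exact h
    · exact absurd hst.symm (hinj t s h hs)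
  have hBg0 : B (g 0) = g (m + 1) := by
    have h1 := hprev (m + 1)
    have hodd : ¬ Even (m + 1) := by
      rcases hev with ⟨t, ht⟩
      simp only [Nat.even_iff] at *
      omega
    rw [if_neg hodd] at h1
    rw [← heq] at h1
    exact h1
  have cl : ∀ k, k < m + 2 → ∀ y, (A (g k) = y ∨ B (g k) = y) →
      (k + 1 < m + 2 ∧ y = g (k+1)) ∨ (k + 1 = m + 2 ∧ y = g 0) ∨
      (1 ≤ k ∧ y = g (k-1)) ∨ (k = 0 ∧ y = g (m+1)) := by
    intro k hk y hy
    have hstepk : ∀ (hsk : (if Even k then A else B) (g k) = y),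
        (k + 1 < m + 2 ∧ y = g (k+1)) ∨ (k + 1 = m + 2 ∧ y = g 0) := by
      intro hsk
      have h1 : g (k+1) = y := by rw [hsucc k, hsk]
      rcases Nat.lt_or_ge (k+1) (m+2) with h | h
      · exact Or.inl ⟨h, h1.symm⟩
      · have hkm : k + 1 = m + 2 := by omega
        right
        refine ⟨hkm, ?_⟩
        rw [← h1, hkm, ← heq]
    have hothk : ∀ (hsk : (if Even k then B else A) (g k) = y),
        (1 ≤ k ∧ y = g (k-1)) ∨ (k = 0 ∧ y = g (m+1)) := by
      intro hsk
      rcases Nat.eq_zero_or_pos k with rfl | hk0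
      · right
        refine ⟨rfl, ?_⟩
        rw [if_pos Even.zero] at hsk
        rw [← hsk, hBg0]
      · left
        refine ⟨hk0, ?_⟩
        obtain ⟨k', rfl⟩ : ∃ k', k = k' + 1 := ⟨k - 1, by omega⟩
        have h1 := hprev k'
        have hpark : (if Even k' then A else B) = (if Even (k' + 1) then B else A) := by
          by_cases hek : Even k'
          · rw [if_pos hek, if_neg (by simp [Nat.even_iff] at hek ⊢; omega)]
          · rw [if_neg hek, if_pos (by simp [Nat.even_iff] at hek ⊢; omega)]
        rw [hpark, hsk] at h1
        simp [← h1]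
    by_cases hek : Even k
    · rcases hy with hy | hy
      · rcases hstepk (by rwa [if_pos hek]) with h | h
        · exact Or.inl h
        · exact Or.inr (Or.inl h)
      · rcases hothk (by rwa [if_pos hek]) with h | h
        · exact Or.inr (Or.inr (Or.inl h))
        · exact Or.inr (Or.inr (Or.inr h))
    · rcases hy with hy | hy
      · rcases hothk (by rwa [if_neg hek]) with h | h
        · exact Or.inr (Or.inr (Or.inl h))
        · exact Or.inr (Or.inr (Or.inr h))
      · rcases hstepk (by rwa [if_neg hek]) with h | h
        · exact Or.inl h
        · exact Or.inr (Or.inl h)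
  -- surjectivity
  have hsurj : ∀ w, U.connectedComponentMk w = U.connectedComponentMk v0 →
      ∃ k, k < m + 2 ∧ g k = w := by
    intro w hw
    have hr : U.Reachable w v0 := ConnectedComponent.exact hw
    obtain ⟨p⟩ := hr
    clear hw
    clear_value g
    clear hgdef hmem hsucc hprev hex hmin hij heq hinj hinj' hnostall hBg0 hdeg
    induction p with
    | nil => exact ⟨0, by omega, hg0⟩
    | @cons a b' c h p ih =>
      obtain ⟨k, hk, rfl⟩ := ih hg0
      have h2 : U.Adj (g k) a := h.symm
      rw [hadj] at h2
      obtain ⟨hy, hne2⟩ := h2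
      rcases cl k hk a hy with ⟨h1, h2⟩ | ⟨h1, h2⟩ | ⟨h1, h2⟩ | ⟨h1, h2⟩
      · exact ⟨k + 1, h1, h2.symm⟩
      · exact ⟨0, by omega, h2.symm⟩
      · exact ⟨k - 1, by omega, h2.symm⟩
      · exact ⟨m + 1, by omega, h2.symm⟩
  -- step adjacency
  have hstep : ∀ s, U.Adj (g s) (g (s+1)) := by
    intro s
    rw [hadj]
    refine ⟨?_, hnostall s⟩
    rw [hsucc s]
    by_cases hes : Even s
    · left; rw [if_pos hes]
    · right; rw [if_neg hes]
  have hstep2 : U.Adj (g (m+1)) (g 0) := by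
    have := hstep (m+1)
    rwa [← heq] at this
  -- characterization
  have hchar : ∀ a b : Fin (m+2), U.Adj (g a.val) (g b.val) ↔
      (b.val = (a.val + 1) % (m + 2) ∨ a.val = (b.val + 1) % (m + 2)) := by
    intro a b
    constructor
    · intro h
      have h2 := h
      rw [hadj] at h2
      obtain ⟨hy, hne2⟩ := h2
      rcases cl a.val a.isLt (g b.val) hy with ⟨h1, h2⟩ | ⟨h1, h2⟩ | ⟨h1, h2⟩ | ⟨h1, h2⟩
      · left
        have := hinj' b.val (a.val + 1) b.isLt h1 h2
        rw [this, Nat.mod_eq_of_lt h1]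
      · left
        have := hinj' b.val 0 b.isLt (by omega) h2
        rw [this, h1, Nat.mod_self]
      · right
        have := hinj' b.val (a.val - 1) b.isLt (by omega) h2
        have ha2 : a.val < m + 2 := a.isLt
        rw [Nat.mod_eq_of_lt (by omega)]
        omega
      · right
        have := hinj' b.val (m + 1) b.isLt (by omega) h2
        rw [this, h1, Nat.mod_self]
    · intro h
      rcases h with h | h
      · rcases Nat.lt_or_ge (a.val + 1) (m + 2) with h2 | h2
        · rw [Nat.mod_eq_of_lt h2] at h
          rw [h]
          exact hstep a.val
        · have ha2 : a.val < m + 2 := a.isLt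
          have hav : a.val = m + 1 := by omega
          have hb0 : b.val = 0 := by rw [h, show a.val + 1 = m + 2 by omega, Nat.mod_self]
          rw [hav, hb0]
          exact hstep2
      · rcases Nat.lt_or_ge (b.val + 1) (m + 2) with h2 | h2
        · rw [Nat.mod_eq_of_lt h2] at h
          rw [h]
          exact (hstep b.val).symm
        · have hb2 : b.val < m + 2 := b.isLt
          have hbv : b.val = m + 1 := by omega
          have ha0 : a.val = 0 := by rw [h, show b.val + 1 = m + 2 by omega, Nat.mod_self]
          rw [hbv, ha0]
          exact hstep2.symm
  have hsub : ∀ a b : Fin (m+2), (b - a = 1) ↔ b.val = (a.val + 1) % (m + 2) := by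
    intro a b
    simp [sub_eq_iff_eq_add, Fin.ext_iff, Fin.add_def, Fin.val_one, Nat.add_comm]
  -- build the iso
  refine ⟨m + 2, by omega, hev, ?_⟩
  have hmem' : ∀ k : Fin (m+2), g k ∈ (U.connectedComponentMk v0).supp := fun k => by
    rw [ConnectedComponent.mem_supp_iff]; exact hmem k
  set φ : Fin (m+2) → ↥((U.connectedComponentMk v0).supp) := fun k => ⟨g k, hmem' k⟩ with hφ
  have hφbij : Function.Bijective φ := by
    constructor
    · intro a b hab
      have h1 : g a = g b := congrArg Subtype.val hab
      exact Fin.ext (hinj' a b a.isLt b.isLt h1)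
    · rintro ⟨w, hw⟩
      rw [ConnectedComponent.mem_supp_iff] at hw
      obtain ⟨k, hk, hgk⟩ := hsurj w hw
      exact ⟨⟨k, hk⟩, Subtype.ext hgk⟩
  refine ⟨SimpleGraph.Iso.symm ⟨Equiv.ofBijective φ hφbij, ?_⟩⟩
  intro a b
  show (U.induce _).Adj (φ a) (φ b) ↔ (cycleGraph (m+2)).Adj a b
  rw [cycleGraph_adj]
  have : (U.induce _).Adj (φ a) (φ b) ↔ U.Adj (g a.val) (g b.val) := by simp [hφ]
  rw [this, hchar a b, ← hsub a b, ← hsub b a]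
  tauto
end Main
end BSaux


theorem key_lem {V : Type} (G G' : SimpleGraph V) (hsame : SameHomog3 G G')
    (U : SimpleGraph V) (hU : U = booleanSum G G') (htf : U.CliqueFree 3) :
    ∀ x y z : V, U.Adj x y → U.Adj x z → y ≠ z → (G.Adj x y ↔ ¬ G.Adj x z) := by
  classical
  subst hU
  intro x y z hxy hxz hyz
  have hxy' : x ≠ y := hxy.ne
  have hxz' : x ≠ z := hxz.ne
  have hnadj : ¬ (booleanSum G G').Adj y z := fun h =>
    htf {x, y, z} (is3Clique_triple_iff.2 ⟨hxy, hxz, h⟩)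
  have hxyd : G.Adj x y ↔ ¬ G'.Adj x y := by
    rcases hxy with ⟨h1, h2⟩ | ⟨h1, h2⟩ <;> tauto
  have hxzd : G.Adj x z ↔ ¬ G'.Adj x z := by
    rcases hxz with ⟨h1, h2⟩ | ⟨h1, h2⟩ <;> tauto
  have hagree : G.Adj y z ↔ G'.Adj y z := by
    constructor
    · intro h; by_contra h'; exact hnadj (Or.inl ⟨h, h'⟩)
    · intro h; by_contra h'; exact hnadj (Or.inr ⟨h, h'⟩)
  have hcard : ({x, y, z} : Finset V).card = 3 :=
    Finset.card_eq_three.2 ⟨x, y, z, hxy', hxz', hyz, rfl⟩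
  have hcl : ∀ H : SimpleGraph V,
      H.IsClique (({x, y, z} : Finset V) : Set V) ↔ (H.Adj x y ∧ H.Adj x z ∧ H.Adj y z) :=
    fun H => Iff.trans ⟨fun h => ⟨h, hcard⟩, fun h => h.1⟩ is3Clique_triple_iff
  have hs := hsame {x, y, z} hcard
  rw [hcl G, hcl Gᶜ, hcl G', hcl G'ᶜ] at hs
  simp only [compl_adj, hxy', hxz', hyz, ne_eq, not_false_iff, true_and] at hs
  tauto


/-- If `U` is the Boolean sum of two graphs with the same 3-element homogeneous subsets and
`U` contains no triangle, then every connected component of `U` is a cycle of even length or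
a path; in particular `U` is bipartite. -/
theorem stmt_6 {V : Type} [Fintype V] (G G' : SimpleGraph V) (hsame : SameHomog3 G G')
    (U : SimpleGraph V) (hU : U = booleanSum G G') (htf : U.CliqueFree 3) :
    (∀ c : U.ConnectedComponent, CompIsEvenCycleOrPath U c) ∧ _root_.IsBipartite U := by
  classical
  have key : ∀ x y z : V, U.Adj x y → U.Adj x z → y ≠ z → (G.Adj x y ↔ ¬ G.Adj x z) :=
    key_lem G G' hsame U hU htf
  -- the two involutions
  let A : V → V := fun x => if h : ∃ y, U.Adj x y ∧ G.Adj x y then h.choose else x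
  let B : V → V := fun x => if h : ∃ y, U.Adj x y ∧ ¬ G.Adj x y then h.choose else x
  have hAspec : ∀ x, (∃ y, U.Adj x y ∧ G.Adj x y) → U.Adj x (A x) ∧ G.Adj x (A x) := by
    intro x h
    simp only [A, dif_pos h]
    exact h.choose_spec
  have hBspec : ∀ x, (∃ y, U.Adj x y ∧ ¬ G.Adj x y) → U.Adj x (B x) ∧ ¬ G.Adj x (B x) := by
    intro x h
    simp only [B, dif_pos h]
    exact h.choose_spec
  have hAeq : ∀ x y, U.Adj x y → G.Adj x y → A x = y := by
    intro x y h1 h2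
    have hex : ∃ y, U.Adj x y ∧ G.Adj x y := ⟨y, h1, h2⟩
    obtain ⟨h3, h4⟩ := hAspec x hex
    by_contra hne
    exact ((key x (A x) y h3 h1 hne).mp h4) h2
  have hBeq : ∀ x y, U.Adj x y → ¬ G.Adj x y → B x = y := by
    intro x y h1 h2
    have hex : ∃ y, U.Adj x y ∧ ¬ G.Adj x y := ⟨y, h1, h2⟩
    obtain ⟨h3, h4⟩ := hBspec x hex
    by_contra hne
    exact h4 ((key x (B x) y h3 h1 hne).mpr h2)
  have hBeq' : ∀ x y, U.Adj x y → ¬ G.Adj x y → B x = y := hBeq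
  have hAadj : ∀ x y, A x = y → x ≠ y → U.Adj x y ∧ G.Adj x y := by
    intro x y h1 h2
    by_cases hex : ∃ y, U.Adj x y ∧ G.Adj x y
    · obtain ⟨h3, h4⟩ := hAspec x hex
      rw [h1] at h3 h4
      exact ⟨h3, h4⟩
    · exfalso
      apply h2
      rw [← h1]
      simp only [A, dif_neg hex]
  have hBadj : ∀ x y, B x = y → x ≠ y → U.Adj x y ∧ ¬ G.Adj x y := by
    intro x y h1 h2
    by_cases hex : ∃ y, U.Adj x y ∧ ¬ G.Adj x y
    · obtain ⟨h3, h4⟩ := hBspec x hex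
      rw [h1] at h3 h4
      exact ⟨h3, h4⟩
    · exfalso
      apply h2
      rw [← h1]
      simp only [B, dif_neg hex]
  have hA : Function.Involutive A := by
    intro x
    by_cases hex : ∃ y, U.Adj x y ∧ G.Adj x y
    · obtain ⟨h1, h2⟩ := hAspec x hex
      exact hAeq (A x) x h1.symm h2.symm
    · have h1 : A x = x := by simp only [A, dif_neg hex]
      rw [h1, h1]
  have hB : Function.Involutive B := by
    intro x
    by_cases hex : ∃ y, U.Adj x y ∧ ¬ G.Adj x y
    · obtain ⟨h1, h2⟩ := hBspec x hex
      exact hBeq (B x) x h1.symm (fun h : G.Adj (B x) x => h2 h.symm)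
    · have h1 : B x = x := by simp only [B, dif_neg hex]
      rw [h1, h1]
  have hadj : ∀ x y, U.Adj x y ↔ ((A x = y ∨ B x = y) ∧ x ≠ y) := by
    intro x y
    constructor
    · intro h
      refine ⟨?_, h.ne⟩
      by_cases hg : G.Adj x y
      · exact Or.inl (hAeq x y h hg)
      · exact Or.inr (hBeq x y h hg)
    · rintro ⟨h | h, hne⟩
      · exact (hAadj x y h hne).1
      · exact (hBadj x y h hne).1
  have hne : ∀ x y, x ≠ y → A x = y → B x = y → False := by
    intro x y hxy h1 h2
    exact (hBadj x y h2 hxy).2 (hAadj x y h1 hxy).2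
  have part1 : ∀ c : U.ConnectedComponent, CompIsEvenCycleOrPath U c := by
    intro c
    obtain ⟨v0, hv0⟩ := c.exists_rep
    have hv0' : U.connectedComponentMk v0 = c := hv0
    rw [← hv0']
    unfold CompIsEvenCycleOrPath
    by_cases hend : ∃ v, U.connectedComponentMk v = U.connectedComponentMk v0 ∧
        (A v = v ∨ B v = v)
    · right
      obtain ⟨v, hv, hAv | hBv⟩ := hend
      · have hadj' : ∀ x y, U.Adj x y ↔ ((B x = y ∨ A x = y) ∧ x ≠ y) := by
          intro x y; rw [hadj]; tauto
        have hne' : ∀ x y, x ≠ y → B x = y → A x = y → False := fun x y h h1 h2 =>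
          hne x y h h2 h1
        obtain ⟨n, hn⟩ := BSaux.path_case hB hA hadj' v hAv
        rw [← hv]
        exact ⟨n, hn⟩
      · obtain ⟨n, hn⟩ := BSaux.path_case hA hB hadj v hBv
        rw [← hv]
        exact ⟨n, hn⟩
    · left
      push_neg at hend
      exact BSaux.cycle_case hA hB hadj hne v0 (fun w hw => hend w hw)
  refine ⟨part1, ?_⟩
  -- bipartiteness
  have hcol : ∀ c : U.ConnectedComponent, ∃ κ : ↥c.supp → Bool,
      ∀ a b : ↥c.supp, (U.induce c.supp).Adj a b → κ a ≠ κ b := by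
    intro c
    rcases part1 c with ⟨n, hn3, hnev, ⟨e⟩⟩ | ⟨n, ⟨e⟩⟩
    · obtain ⟨m, rfl⟩ : ∃ m, n = m + 2 := ⟨n - 2, by omega⟩
      refine ⟨fun a => decide ((e a).val % 2 = 0), ?_⟩
      intro a b hab
      have h2 : (cycleGraph (m+2)).Adj (e a) (e b) := e.map_rel_iff.mpr hab
      rw [cycleGraph_adj] at h2
      have hs : ∀ u v : Fin (m+2), u - v = 1 → u.val = (v.val + 1) % (m+2) := by
        intro u v h
        rw [sub_eq_iff_eq_add] at h
        rw [h]
        simp [Fin.add_def, Fin.val_one, Nat.add_comm]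
      simp only [ne_eq, decide_eq_decide]
      obtain ⟨t, ht⟩ := hnev
      rcases h2 with h2 | h2
      · have h3 := hs _ _ h2
        have h4 : (e b).val < m + 2 := (e b).isLt
        have h5 : (e a).val < m + 2 := (e a).isLt
        rcases Nat.lt_or_ge ((e b).val + 1) (m + 2) with h6 | h6
        · rw [Nat.mod_eq_of_lt h6] at h3; omega
        · rw [show (e b).val + 1 = m + 2 by omega, Nat.mod_self] at h3; omega
      · have h3 := hs _ _ h2
        have h4 : (e b).val < m + 2 := (e b).isLt
        have h5 : (e a).val < m + 2 := (e a).isLt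
        rcases Nat.lt_or_ge ((e a).val + 1) (m + 2) with h6 | h6
        · rw [Nat.mod_eq_of_lt h6] at h3; omega
        · rw [show (e a).val + 1 = m + 2 by omega, Nat.mod_self] at h3; omega
    · refine ⟨fun a => decide ((e a).val % 2 = 0), ?_⟩
      intro a b hab
      have h2 : (pathGraph n).Adj (e a) (e b) := e.map_rel_iff.mpr hab
      rw [pathGraph_adj] at h2
      simp only [ne_eq, decide_eq_decide]
      omega
  choose kappa hkappa using hcol
  have hmemv : ∀ v : V, v ∈ (U.connectedComponentMk v).supp := fun v => by
    rw [ConnectedComponent.mem_supp_iff]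
  let f : V → Bool := fun v => kappa (U.connectedComponentMk v) ⟨v, hmemv v⟩
  have hf : ∀ x y, U.Adj x y → f x ≠ f y := by
    intro x y hxy
    have hcc : U.connectedComponentMk y = U.connectedComponentMk x :=
      ConnectedComponent.sound hxy.symm.reachable
    have hymem : y ∈ (U.connectedComponentMk x).supp := by
      rw [ConnectedComponent.mem_supp_iff]; exact hcc
    have hfy : f y = kappa (U.connectedComponentMk x) ⟨y, hymem⟩ := by
      have gen : ∀ (c : U.ConnectedComponent) (h : U.connectedComponentMk y = c),
          f y = kappa c ⟨y, (ConnectedComponent.mem_supp_iff c y).mpr h⟩ := by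
        rintro c rfl; rfl
      exact gen _ hcc
    rw [hfy]
    exact hkappa (U.connectedComponentMk x) ⟨x, hmemv x⟩ ⟨y, hymem⟩ (by simp [hxy])
  refine ⟨{v | f v = true}, {v | f v = false}, ?_, ?_, ?_, ?_⟩
  · ext v
    simp only [Set.mem_union, Set.mem_setOf_eq, Set.mem_univ, iff_true]
    cases h : f v
    · right; rfl
    · left; rfl
  · ext v
    simp only [Set.mem_inter_iff, Set.mem_setOf_eq, Set.mem_empty_iff_false, iff_false, not_and]
    intro h1 h2
    rw [h1] at h2
    exact Bool.noConfusion h2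
  · intro x hx y hy hxy
    exact hf x y hxy (hx.trans hy.symm)
  · intro x hx y hy hxy
    exact hf x y hxy (hx.trans hy.symm)
end

section
/- Let G and G' be two simple graphs on the same vertex set V and let U be the Boolean sum of G and G'. Then G and G' have the same 3-element homogeneous subsets if and only if both of the following hold: the sets A_1 := E(U) ∩ E(G) and A_2 := E(U) \ E(G) are independent sets of the edge-graph S(U) (and partition its vertex set), and the sets B_1 := E(complement of U) ∩ E(G) and B_2 := E(complement of U) \ E(G) are independent sets of the edge-graph S(complement of U) (and partition its vertex set). -/
open SimpleGraph

/-- The edge-graph `S(U)`: vertices are edges of `U`; two edges `u = xy` and `v = xz`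
(with `x, y, z` pairwise distinct) are adjacent iff `yz` is not an edge of `U`. -/
def edgeGraph {V : Type*} (U : SimpleGraph V) : SimpleGraph U.edgeSet where
  Adj u v := ∃ x y z : V, x ≠ y ∧ x ≠ z ∧ y ≠ z ∧
    (u : Sym2 V) = s(x, y) ∧ (v : Sym2 V) = s(x, z) ∧ ¬ U.Adj y z
  symm := by
    constructor
    rintro u v ⟨x, y, z, hxy, hxz, hyz, hu, hv, h⟩
    exact ⟨x, z, y, hxz, hxy, hyz.symm, hv, hu, fun h' => h h'.symm⟩
  loopless := by
    constructor
    rintro u ⟨x, y, z, hxy, hxz, hyz, hu, hv, h⟩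
    rw [hu, Sym2.eq_iff] at hv
    rcases hv with ⟨-, h1⟩ | ⟨h1, -⟩
    · exact hyz h1
    · exact hxz h1
section Aux

open SimpleGraph

variable {V : Type*}

private lemma triple_clique_iff (G : SimpleGraph V) {x y z : V} (hxy : x ≠ y) (hxz : x ≠ z)
    (hyz : y ≠ z) : G.IsClique {x, y, z} ↔ G.Adj x y ∧ G.Adj x z ∧ G.Adj y z := by
  constructor
  · intro h
    exact ⟨h (by simp) (by simp) hxy, h (by simp) (by simp) hxz, h (by simp) (by simp) hyz⟩
  · rintro ⟨h1, h2, h3⟩ a ha b hb hab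
    simp only [Set.mem_insert_iff, Set.mem_singleton_iff] at ha hb
    rcases ha with rfl | rfl | rfl <;> rcases hb with rfl | rfl | rfl <;>
      first
        | exact absurd rfl hab
        | assumption
        | exact h1.symm
        | exact h2.symm
        | exact h3.symm

private lemma triple_homog_iff (G : SimpleGraph V) {x y z : V} (hxy : x ≠ y) (hxz : x ≠ z)
    (hyz : y ≠ z) :
    (G.IsClique {x, y, z} ∨ Gᶜ.IsClique {x, y, z}) ↔
      ((G.Adj x y ∧ G.Adj x z ∧ G.Adj y z) ∨ (¬G.Adj x y ∧ ¬G.Adj x z ∧ ¬G.Adj y z)) := by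
  rw [triple_clique_iff G hxy hxz hyz, triple_clique_iff Gᶜ hxy hxz hyz]
  simp [compl_adj, hxy, hxz, hyz]

variable {a b c a' b' c' : Prop}

private lemma mkx (h : a) (h' : ¬a') : ((a ∧ ¬a') ∨ (a' ∧ ¬a)) := Or.inl ⟨h, h'⟩
private lemma mkx' (h : a') (h' : ¬a) : ((a ∧ ¬a') ∨ (a' ∧ ¬a)) := Or.inr ⟨h, h'⟩
private lemma nx (h : a) (h' : a') : ¬((a ∧ ¬a') ∨ (a' ∧ ¬a)) :=
  fun u => u.elim (fun t => t.2 h') (fun t => t.2 h)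
private lemma nx2 (h : ¬a) (h' : ¬a') : ¬((a ∧ ¬a') ∨ (a' ∧ ¬a)) :=
  fun u => u.elim (fun t => h t.1) (fun t => h' t.1)

private lemma prop_fwd
    (h1 : ((a ∧ ¬a') ∨ (a' ∧ ¬a)) → ((b ∧ ¬b') ∨ (b' ∧ ¬b)) → ¬((c ∧ ¬c') ∨ (c' ∧ ¬c)) → a → b → False)
    (h2 : ((a ∧ ¬a') ∨ (a' ∧ ¬a)) → ((c ∧ ¬c') ∨ (c' ∧ ¬c)) → ¬((b ∧ ¬b') ∨ (b' ∧ ¬b)) → a → c → False)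
    (h3 : ((b ∧ ¬b') ∨ (b' ∧ ¬b)) → ((c ∧ ¬c') ∨ (c' ∧ ¬c)) → ¬((a ∧ ¬a') ∨ (a' ∧ ¬a)) → b → c → False)
    (h4 : ((a ∧ ¬a') ∨ (a' ∧ ¬a)) → ((b ∧ ¬b') ∨ (b' ∧ ¬b)) → ¬((c ∧ ¬c') ∨ (c' ∧ ¬c)) → ¬a → ¬b → False)
    (h5 : ((a ∧ ¬a') ∨ (a' ∧ ¬a)) → ((c ∧ ¬c') ∨ (c' ∧ ¬c)) → ¬((b ∧ ¬b') ∨ (b' ∧ ¬b)) → ¬a → ¬c → False)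
    (h6 : ((b ∧ ¬b') ∨ (b' ∧ ¬b)) → ((c ∧ ¬c') ∨ (c' ∧ ¬c)) → ¬((a ∧ ¬a') ∨ (a' ∧ ¬a)) → ¬b → ¬c → False)
    (h7 : ¬((a ∧ ¬a') ∨ (a' ∧ ¬a)) → ¬((b ∧ ¬b') ∨ (b' ∧ ¬b)) → ((c ∧ ¬c') ∨ (c' ∧ ¬c)) → a → b → False)
    (h8 : ¬((a ∧ ¬a') ∨ (a' ∧ ¬a)) → ¬((c ∧ ¬c') ∨ (c' ∧ ¬c)) → ((b ∧ ¬b') ∨ (b' ∧ ¬b)) → a → c → False)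
    (h9 : ¬((b ∧ ¬b') ∨ (b' ∧ ¬b)) → ¬((c ∧ ¬c') ∨ (c' ∧ ¬c)) → ((a ∧ ¬a') ∨ (a' ∧ ¬a)) → b → c → False)
    (h10 : ¬((a ∧ ¬a') ∨ (a' ∧ ¬a)) → ¬((b ∧ ¬b') ∨ (b' ∧ ¬b)) → ((c ∧ ¬c') ∨ (c' ∧ ¬c)) → ¬a → ¬b → False)
    (h11 : ¬((a ∧ ¬a') ∨ (a' ∧ ¬a)) → ¬((c ∧ ¬c') ∨ (c' ∧ ¬c)) → ((b ∧ ¬b') ∨ (b' ∧ ¬b)) → ¬a → ¬c → False)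
    (h12 : ¬((b ∧ ¬b') ∨ (b' ∧ ¬b)) → ¬((c ∧ ¬c') ∨ (c' ∧ ¬c)) → ((a ∧ ¬a') ∨ (a' ∧ ¬a)) → ¬b → ¬c → False) :
    ((a ∧ b ∧ c) ∨ (¬a ∧ ¬b ∧ ¬c)) → ((a' ∧ b' ∧ c') ∨ (¬a' ∧ ¬b' ∧ ¬c')) := by
  classical
  rintro (⟨ha, hb, hc⟩ | ⟨ha, hb, hc⟩) <;>
    by_cases ha' : a' <;> by_cases hb' : b' <;> by_cases hc' : c'
  · exact Or.inl ⟨ha', hb', hc'⟩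
  · exact absurd (h7 (nx ha ha') (nx hb hb') (mkx hc hc') ha hb) not_false
  · exact absurd (h8 (nx ha ha') (nx hc hc') (mkx hb hb') ha hc) not_false
  · exact absurd (h3 (mkx hb hb') (mkx hc hc') (nx ha ha') hb hc) not_false
  · exact absurd (h9 (nx hb hb') (nx hc hc') (mkx ha ha') hb hc) not_false
  · exact absurd (h2 (mkx ha ha') (mkx hc hc') (nx hb hb') ha hc) not_false
  · exact absurd (h1 (mkx ha ha') (mkx hb hb') (nx hc hc') ha hb) not_false
  · exact Or.inr ⟨ha', hb', hc'⟩
  · exact Or.inl ⟨ha', hb', hc'⟩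
  · exact absurd (h4 (mkx' ha' ha) (mkx' hb' hb) (nx2 hc hc') ha hb) not_false
  · exact absurd (h5 (mkx' ha' ha) (mkx' hc' hc) (nx2 hb hb') ha hc) not_false
  · exact absurd (h12 (nx2 hb hb') (nx2 hc hc') (mkx' ha' ha) hb hc) not_false
  · exact absurd (h6 (mkx' hb' hb) (mkx' hc' hc) (nx2 ha ha') hb hc) not_false
  · exact absurd (h11 (nx2 ha ha') (nx2 hc hc') (mkx' hb' hb) ha hc) not_false
  · exact absurd (h10 (nx2 ha ha') (nx2 hb hb') (mkx' hc' hc) ha hb) not_false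
  · exact Or.inr ⟨ha', hb', hc'⟩

end Aux


set_option maxHeartbeats 1000000 in
/-- Lemma 5, (a) ⇔ (c): `G` and `G'` have the same 3-element homogeneous subsets iff
`A₁ := E(U) ∩ E(G)` and `A₂ := E(U) \ E(G)` partition the vertex set of `S(U)` into two
independent sets, and `B₁ := E(Uᶜ) ∩ E(G)` and `B₂ := E(Uᶜ) \ E(G)` partition the vertex
set of `S(Uᶜ)` into two independent sets, where `U` is the Boolean sum of `G` and `G'`. -/
theorem stmt_8 {V : Type*} (G G' : SimpleGraph V) (U : SimpleGraph V)
    (hU : U = booleanSum G G')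
    (A1 A2 B1 B2 : Set (Sym2 V))
    (hA1 : A1 = U.edgeSet ∩ G.edgeSet) (hA2 : A2 = U.edgeSet \ G.edgeSet)
    (hB1 : B1 = Uᶜ.edgeSet ∩ G.edgeSet) (hB2 : B2 = Uᶜ.edgeSet \ G.edgeSet) :
    SameHomog3 G G' ↔
      ((A1 ∪ A2 = U.edgeSet ∧ A1 ∩ A2 = ∅ ∧
        (∀ u v : U.edgeSet, (u : Sym2 V) ∈ A1 → (v : Sym2 V) ∈ A1 →
          ¬ (edgeGraph U).Adj u v) ∧
        (∀ u v : U.edgeSet, (u : Sym2 V) ∈ A2 → (v : Sym2 V) ∈ A2 →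
          ¬ (edgeGraph U).Adj u v)) ∧
       (B1 ∪ B2 = Uᶜ.edgeSet ∧ B1 ∩ B2 = ∅ ∧
        (∀ u v : Uᶜ.edgeSet, (u : Sym2 V) ∈ B1 → (v : Sym2 V) ∈ B1 →
          ¬ (edgeGraph Uᶜ).Adj u v) ∧
        (∀ u v : Uᶜ.edgeSet, (u : Sym2 V) ∈ B2 → (v : Sym2 V) ∈ B2 →
          ¬ (edgeGraph Uᶜ).Adj u v))) := by
  classical
  subst hA1 hA2 hB1 hB2
  have hUadj : ∀ p q : V, U.Adj p q ↔
      ((G.Adj p q ∧ ¬G'.Adj p q) ∨ (G'.Adj p q ∧ ¬G.Adj p q)) := by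
    subst hU; exact fun _ _ => Iff.rfl
  constructor
  · -- forward
    intro hsame
    have key : ∀ x y z : V, x ≠ y → x ≠ z → y ≠ z →
        (((G.Adj x y ∧ G.Adj x z ∧ G.Adj y z) ∨ (¬G.Adj x y ∧ ¬G.Adj x z ∧ ¬G.Adj y z)) ↔
        ((G'.Adj x y ∧ G'.Adj x z ∧ G'.Adj y z) ∨ (¬G'.Adj x y ∧ ¬G'.Adj x z ∧ ¬G'.Adj y z))) := by
      intro x y z hxy hxz hyz
      have hcard : ({x, y, z} : Finset V).card = 3 :=
        Finset.card_eq_three.mpr ⟨x, y, z, hxy, hxz, hyz, rfl⟩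
      have hh := hsame {x, y, z} hcard
      rw [show ((({x, y, z} : Finset V) : Set V)) = {x, y, z} by simp] at hh
      rwa [triple_homog_iff G hxy hxz hyz, triple_homog_iff G' hxy hxz hyz] at hh
    refine ⟨⟨Set.inter_union_diff _ _, ?_, ?_, ?_⟩, Set.inter_union_diff _ _, ?_, ?_, ?_⟩
    · ext e; simp only [Set.mem_inter_iff, Set.mem_diff, Set.mem_empty_iff_false, iff_false]
      tauto
    · rintro u v hu hv ⟨x, y, z, hxy, hxz, hyz, hue, hve, hn⟩
      rw [hue] at hu; rw [hve] at hv
      simp only [Set.mem_inter_iff, SimpleGraph.mem_edgeSet] at hu hv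
      obtain ⟨u1, g1⟩ := hu
      obtain ⟨u2, g2⟩ := hv
      have hh := key x y z (u1.ne) (u2.ne) hyz
      rw [hUadj] at u1 u2
      rw [hUadj] at hn
      clear hsame key
      tauto
    · rintro u v hu hv ⟨x, y, z, hxy, hxz, hyz, hue, hve, hn⟩
      rw [hue] at hu; rw [hve] at hv
      simp only [Set.mem_diff, SimpleGraph.mem_edgeSet] at hu hv
      obtain ⟨u1, g1⟩ := hu
      obtain ⟨u2, g2⟩ := hv
      have hh := key x y z (u1.ne) (u2.ne) hyz
      rw [hUadj] at u1 u2
      rw [hUadj] at hn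
      clear hsame key
      tauto
    · ext e; simp only [Set.mem_inter_iff, Set.mem_diff, Set.mem_empty_iff_false, iff_false]
      tauto
    · rintro u v hu hv ⟨x, y, z, hxy, hxz, hyz, hue, hve, hn⟩
      rw [hue] at hu; rw [hve] at hv
      simp only [Set.mem_inter_iff, SimpleGraph.mem_edgeSet, SimpleGraph.compl_adj] at hu hv
      obtain ⟨⟨-, nu1⟩, g1⟩ := hu
      obtain ⟨⟨-, nu2⟩, g2⟩ := hv
      have u3 : U.Adj y z := by
        by_contra h
        exact hn ((U.compl_adj y z).mpr ⟨hyz, h⟩)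
      have hh := key x y z hxy hxz hyz
      rw [hUadj] at u3
      rw [hUadj] at nu1 nu2
      clear hsame key hn
      tauto
    · rintro u v hu hv ⟨x, y, z, hxy, hxz, hyz, hue, hve, hn⟩
      rw [hue] at hu; rw [hve] at hv
      simp only [Set.mem_diff, SimpleGraph.mem_edgeSet, SimpleGraph.compl_adj] at hu hv
      obtain ⟨⟨-, nu1⟩, g1⟩ := hu
      obtain ⟨⟨-, nu2⟩, g2⟩ := hv
      have u3 : U.Adj y z := by
        by_contra h
        exact hn ((U.compl_adj y z).mpr ⟨hyz, h⟩)
      have hh := key x y z hxy hxz hyz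
      rw [hUadj] at u3
      rw [hUadj] at nu1 nu2
      clear hsame key hn
      tauto
  · -- backward
    rintro ⟨⟨-, -, hA1i, hA2i⟩, -, -, hB1i, hB2i⟩
    have CA1 : ∀ x y z : V, y ≠ z → U.Adj x y → U.Adj x z → ¬U.Adj y z →
        G.Adj x y → G.Adj x z → False := by
      intro x y z hyz u1 u2 nu3 g1 g2
      exact hA1i ⟨s(x, y), U.mem_edgeSet.mpr u1⟩ ⟨s(x, z), U.mem_edgeSet.mpr u2⟩
        ⟨U.mem_edgeSet.mpr u1, G.mem_edgeSet.mpr g1⟩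
        ⟨U.mem_edgeSet.mpr u2, G.mem_edgeSet.mpr g2⟩
        ⟨x, y, z, u1.ne, u2.ne, hyz, rfl, rfl, nu3⟩
    have CA2 : ∀ x y z : V, y ≠ z → U.Adj x y → U.Adj x z → ¬U.Adj y z →
        ¬G.Adj x y → ¬G.Adj x z → False := by
      intro x y z hyz u1 u2 nu3 g1 g2
      exact hA2i ⟨s(x, y), U.mem_edgeSet.mpr u1⟩ ⟨s(x, z), U.mem_edgeSet.mpr u2⟩
        ⟨U.mem_edgeSet.mpr u1, fun h => g1 (G.mem_edgeSet.mp h)⟩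
        ⟨U.mem_edgeSet.mpr u2, fun h => g2 (G.mem_edgeSet.mp h)⟩
        ⟨x, y, z, u1.ne, u2.ne, hyz, rfl, rfl, nu3⟩
    have CB1 : ∀ x y z : V, x ≠ y → x ≠ z → y ≠ z → ¬U.Adj x y → ¬U.Adj x z → U.Adj y z →
        G.Adj x y → G.Adj x z → False := by
      intro x y z hxy hxz hyz nu1 nu2 u3 g1 g2
      have c1 : Uᶜ.Adj x y := (U.compl_adj x y).mpr ⟨hxy, nu1⟩
      have c2 : Uᶜ.Adj x z := (U.compl_adj x z).mpr ⟨hxz, nu2⟩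
      exact hB1i ⟨s(x, y), Uᶜ.mem_edgeSet.mpr c1⟩ ⟨s(x, z), Uᶜ.mem_edgeSet.mpr c2⟩
        ⟨Uᶜ.mem_edgeSet.mpr c1, G.mem_edgeSet.mpr g1⟩
        ⟨Uᶜ.mem_edgeSet.mpr c2, G.mem_edgeSet.mpr g2⟩
        ⟨x, y, z, hxy, hxz, hyz, rfl, rfl, fun h => ((U.compl_adj y z).mp h).2 u3⟩
    have CB2 : ∀ x y z : V, x ≠ y → x ≠ z → y ≠ z → ¬U.Adj x y → ¬U.Adj x z → U.Adj y z →
        ¬G.Adj x y → ¬G.Adj x z → False := by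
      intro x y z hxy hxz hyz nu1 nu2 u3 g1 g2
      have c1 : Uᶜ.Adj x y := (U.compl_adj x y).mpr ⟨hxy, nu1⟩
      have c2 : Uᶜ.Adj x z := (U.compl_adj x z).mpr ⟨hxz, nu2⟩
      exact hB2i ⟨s(x, y), Uᶜ.mem_edgeSet.mpr c1⟩ ⟨s(x, z), Uᶜ.mem_edgeSet.mpr c2⟩
        ⟨Uᶜ.mem_edgeSet.mpr c1, fun h => g1 (G.mem_edgeSet.mp h)⟩
        ⟨Uᶜ.mem_edgeSet.mpr c2, fun h => g2 (G.mem_edgeSet.mp h)⟩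
        ⟨x, y, z, hxy, hxz, hyz, rfl, rfl, fun h => ((U.compl_adj y z).mp h).2 u3⟩
    have CA1' : ∀ x y z : V, y ≠ z → U.Adj x y → U.Adj x z → ¬U.Adj y z →
        G'.Adj x y → G'.Adj x z → False := by
      intro x y z hyz u1 u2 nu3 g1 g2
      refine CA2 x y z hyz u1 u2 nu3 ?_ ?_
      · exact fun h => ((hUadj x y).mp u1).elim (fun t => t.2 g1) (fun t => t.2 h)
      · exact fun h => ((hUadj x z).mp u2).elim (fun t => t.2 g2) (fun t => t.2 h)
    have CA2' : ∀ x y z : V, y ≠ z → U.Adj x y → U.Adj x z → ¬U.Adj y z →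
        ¬G'.Adj x y → ¬G'.Adj x z → False := by
      intro x y z hyz u1 u2 nu3 g1 g2
      refine CA1 x y z hyz u1 u2 nu3 ?_ ?_
      · exact ((hUadj x y).mp u1).elim (fun t => t.1) (fun t => absurd t.1 g1)
      · exact ((hUadj x z).mp u2).elim (fun t => t.1) (fun t => absurd t.1 g2)
    have CB1' : ∀ x y z : V, x ≠ y → x ≠ z → y ≠ z → ¬U.Adj x y → ¬U.Adj x z → U.Adj y z →
        G'.Adj x y → G'.Adj x z → False := by
      intro x y z hxy hxz hyz nu1 nu2 u3 g1 g2
      refine CB1 x y z hxy hxz hyz nu1 nu2 u3 ?_ ?_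
      · by_contra h
        exact nu1 ((hUadj x y).mpr (Or.inr ⟨g1, h⟩))
      · by_contra h
        exact nu2 ((hUadj x z).mpr (Or.inr ⟨g2, h⟩))
    have CB2' : ∀ x y z : V, x ≠ y → x ≠ z → y ≠ z → ¬U.Adj x y → ¬U.Adj x z → U.Adj y z →
        ¬G'.Adj x y → ¬G'.Adj x z → False := by
      intro x y z hxy hxz hyz nu1 nu2 u3 g1 g2
      refine CB2 x y z hxy hxz hyz nu1 nu2 u3 ?_ ?_
      · exact fun h => nu1 ((hUadj x y).mpr (Or.inl ⟨h, g1⟩))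
      · exact fun h => nu2 ((hUadj x z).mpr (Or.inl ⟨h, g2⟩))
    have mk : ∀ p q : V, ((G.Adj p q ∧ ¬G'.Adj p q) ∨ (G'.Adj p q ∧ ¬G.Adj p q)) → U.Adj p q :=
      fun p q => (hUadj p q).mpr
    have mk' : ∀ p q : V, ((G'.Adj p q ∧ ¬G.Adj p q) ∨ (G.Adj p q ∧ ¬G'.Adj p q)) → U.Adj p q :=
      fun p q h => (hUadj p q).mpr h.symm
    have un : ∀ p q : V, U.Adj p q → ((G.Adj p q ∧ ¬G'.Adj p q) ∨ (G'.Adj p q ∧ ¬G.Adj p q)) :=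
      fun p q => (hUadj p q).mp
    have un' : ∀ p q : V, U.Adj p q → ((G'.Adj p q ∧ ¬G.Adj p q) ∨ (G.Adj p q ∧ ¬G'.Adj p q)) :=
      fun p q h => ((hUadj p q).mp h).symm
    intro s hs
    obtain ⟨x, y, z, hxy, hxz, hyz, rfl⟩ := Finset.card_eq_three.mp hs
    rw [show ((({x, y, z} : Finset V) : Set V)) = {x, y, z} by simp]
    rw [triple_homog_iff G hxy hxz hyz, triple_homog_iff G' hxy hxz hyz]
    constructor
    · refine prop_fwd ?_ ?_ ?_ ?_ ?_ ?_ ?_ ?_ ?_ ?_ ?_ ?_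
      · exact fun u1 u2 nu3 => CA1 x y z hyz (mk _ _ u1) (mk _ _ u2) (fun h => nu3 (un _ _ h))
      · exact fun u1 u3 nu2 ga gc =>
          CA1 y x z hxz (mk _ _ u1).symm (mk _ _ u3) (fun h => nu2 (un _ _ h)) ga.symm gc
      · exact fun u2 u3 nu1 gb gc =>
          CA1 z x y hxy (mk _ _ u2).symm (mk _ _ u3).symm (fun h => nu1 (un _ _ h)) gb.symm gc.symm
      · exact fun u1 u2 nu3 => CA2 x y z hyz (mk _ _ u1) (mk _ _ u2) (fun h => nu3 (un _ _ h))
      · exact fun u1 u3 nu2 ga gc =>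
          CA2 y x z hxz (mk _ _ u1).symm (mk _ _ u3) (fun h => nu2 (un _ _ h))
            (fun h => ga h.symm) gc
      · exact fun u2 u3 nu1 gb gc =>
          CA2 z x y hxy (mk _ _ u2).symm (mk _ _ u3).symm (fun h => nu1 (un _ _ h))
            (fun h => gb h.symm) (fun h => gc h.symm)
      · exact fun nu1 nu2 u3 => CB1 x y z hxy hxz hyz (fun h => nu1 (un _ _ h))
          (fun h => nu2 (un _ _ h)) (mk _ _ u3)
      · exact fun nu1 nu3 u2 ga gc => CB1 y x z hxy.symm hyz hxz
          (fun h => nu1 (un _ _ h.symm)) (fun h => nu3 (un _ _ h)) (mk _ _ u2) ga.symm gc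
      · exact fun nu2 nu3 u1 gb gc => CB1 z x y hxz.symm hyz.symm hxy
          (fun h => nu2 (un _ _ h.symm)) (fun h => nu3 (un _ _ h.symm)) (mk _ _ u1)
          gb.symm gc.symm
      · exact fun nu1 nu2 u3 => CB2 x y z hxy hxz hyz (fun h => nu1 (un _ _ h))
          (fun h => nu2 (un _ _ h)) (mk _ _ u3)
      · exact fun nu1 nu3 u2 ga gc => CB2 y x z hxy.symm hyz hxz
          (fun h => nu1 (un _ _ h.symm)) (fun h => nu3 (un _ _ h)) (mk _ _ u2)
          (fun h => ga h.symm) gc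
      · exact fun nu2 nu3 u1 gb gc => CB2 z x y hxz.symm hyz.symm hxy
          (fun h => nu2 (un _ _ h.symm)) (fun h => nu3 (un _ _ h.symm)) (mk _ _ u1)
          (fun h => gb h.symm) (fun h => gc h.symm)
    · refine prop_fwd ?_ ?_ ?_ ?_ ?_ ?_ ?_ ?_ ?_ ?_ ?_ ?_
      · exact fun u1 u2 nu3 => CA1' x y z hyz (mk' _ _ u1) (mk' _ _ u2) (fun h => nu3 (un' _ _ h))
      · exact fun u1 u3 nu2 ga gc =>
          CA1' y x z hxz (mk' _ _ u1).symm (mk' _ _ u3) (fun h => nu2 (un' _ _ h)) ga.symm gc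
      · exact fun u2 u3 nu1 gb gc =>
          CA1' z x y hxy (mk' _ _ u2).symm (mk' _ _ u3).symm (fun h => nu1 (un' _ _ h))
            gb.symm gc.symm
      · exact fun u1 u2 nu3 => CA2' x y z hyz (mk' _ _ u1) (mk' _ _ u2) (fun h => nu3 (un' _ _ h))
      · exact fun u1 u3 nu2 ga gc =>
          CA2' y x z hxz (mk' _ _ u1).symm (mk' _ _ u3) (fun h => nu2 (un' _ _ h))
            (fun h => ga h.symm) gc
      · exact fun u2 u3 nu1 gb gc =>
          CA2' z x y hxy (mk' _ _ u2).symm (mk' _ _ u3).symm (fun h => nu1 (un' _ _ h))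
            (fun h => gb h.symm) (fun h => gc h.symm)
      · exact fun nu1 nu2 u3 => CB1' x y z hxy hxz hyz (fun h => nu1 (un' _ _ h))
          (fun h => nu2 (un' _ _ h)) (mk' _ _ u3)
      · exact fun nu1 nu3 u2 ga gc => CB1' y x z hxy.symm hyz hxz
          (fun h => nu1 (un' _ _ h.symm)) (fun h => nu3 (un' _ _ h)) (mk' _ _ u2) ga.symm gc
      · exact fun nu2 nu3 u1 gb gc => CB1' z x y hxz.symm hyz.symm hxy
          (fun h => nu2 (un' _ _ h.symm)) (fun h => nu3 (un' _ _ h.symm)) (mk' _ _ u1)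
          gb.symm gc.symm
      · exact fun nu1 nu2 u3 => CB2' x y z hxy hxz hyz (fun h => nu1 (un' _ _ h))
          (fun h => nu2 (un' _ _ h)) (mk' _ _ u3)
      · exact fun nu1 nu3 u2 ga gc => CB2' y x z hxy.symm hyz hxz
          (fun h => nu1 (un' _ _ h.symm)) (fun h => nu3 (un' _ _ h)) (mk' _ _ u2)
          (fun h => ga h.symm) gc
      · exact fun nu2 nu3 u1 gb gc => CB2' z x y hxz.symm hyz.symm hxy
          (fun h => nu2 (un' _ _ h.symm)) (fun h => nu3 (un' _ _ h.symm)) (mk' _ _ u1)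
          (fun h => gb h.symm) (fun h => gc h.symm)
end
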